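/- A monomial ideal I in S = K[x_1,...,x_n] is irreducible (i.e., cannot be written as the intersection of two strictly larger monomial ideals) if and only if I is generated by pure powers of a subset of the variables, i.e., I = (x_{i_1}^{a_1}, ..., x_{i_r}^{a_r}) for some variables x_{i_j} and positive integers a_j. -/

import Mathlib

open MvPolynomial

/-- An ideal of a polynomial ring is a *monomial ideal* if it is generated by monomials. -/
def IsMonomialIdeal {K : Type*} [Field K] {n : ℕ}
    (I : Ideal (MvPolynomial (Fin n) K)) : Prop :=
  ∃ G : Set (Fin n →₀ ℕ), I = Ideal.span ((fun d => monomial d (1 : K)) '' G)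

private lemma mono_mem_span {K : Type*} [Field K] {n : ℕ} {G : Set (Fin n →₀ ℕ)}
    {d : Fin n →₀ ℕ} :
    monomial d (1 : K) ∈ Ideal.span ((fun d => monomial d (1 : K)) '' G) ↔ ∃ g ∈ G, g ≤ d := by
  rw [mem_ideal_span_monomial_image]
  simp [support_monomial]

/-- A proper monomial ideal is irreducible (it cannot be written as the intersection of two
strictly larger monomial ideals) if and only if it is generated by pure powers of a subset of
the variables. -/
theorem monomialIdeal_irreducible_iff_purePowers {K : Type*} [Field K] {n : ℕ}
    (I : Ideal (MvPolynomial (Fin n) K)) (hmon : IsMonomialIdeal I) (hproper : I ≠ ⊤) :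
    (¬ ∃ J₁ J₂ : Ideal (MvPolynomial (Fin n) K), IsMonomialIdeal J₁ ∧ IsMonomialIdeal J₂ ∧
        I < J₁ ∧ I < J₂ ∧ I = J₁ ⊓ J₂) ↔
      ∃ (T : Finset (Fin n)) (a : Fin n → ℕ), (∀ i ∈ T, 0 < a i) ∧
        I = Ideal.span ((fun i => (X i : MvPolynomial (Fin n) K) ^ a i) '' (T : Set (Fin n))) := by
  classical
  obtain ⟨G, hG⟩ := hmon
  constructor
  · intro hirr
    by_contra hpp
    apply hirr
    -- the set of exponents of monomials in I
    set M : Set (Fin n →₀ ℕ) := {d | monomial d (1 : K) ∈ I} with hMdef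
    have hGM : G ⊆ M := fun g hg => by
      simp only [hMdef, Set.mem_setOf_eq, hG]
      exact Ideal.subset_span ⟨g, hg, rfl⟩
    have hMmem : ∀ d, d ∈ M ↔ ∃ g ∈ G, g ≤ d := fun d => by
      simp only [hMdef, Set.mem_setOf_eq, hG]; exact mono_mem_span
    -- the canonical pure-power subideal
    set T : Finset (Fin n) := Finset.univ.filter
      (fun i => ∃ b, 0 < b ∧ Finsupp.single i b ∈ M) with hTdef
    set a : Fin n → ℕ := fun i => sInf {b | 0 < b ∧ Finsupp.single i b ∈ M} with hadef
    have hTa : ∀ i ∈ T, 0 < a i ∧ Finsupp.single i (a i) ∈ M := by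
      intro i hi
      have hne : {b | 0 < b ∧ Finsupp.single i b ∈ M}.Nonempty := by
        simpa [hTdef, Set.Nonempty] using hi
      exact Nat.sInf_mem hne
    set J : Ideal (MvPolynomial (Fin n) K) :=
      Ideal.span ((fun d => monomial d (1 : K)) '' ((fun i => Finsupp.single i (a i)) '' ↑T))
      with hJdef
    have hupJ : ∀ d : Fin n →₀ ℕ,
        monomial d (1 : K) ∈ J ↔ ∃ i ∈ T, Finsupp.single i (a i) ≤ d := by
      intro d
      rw [hJdef, mono_mem_span]
      constructor
      · rintro ⟨g, ⟨i, hi, rfl⟩, hle⟩; exact ⟨i, by simpa using hi, hle⟩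
      · rintro ⟨i, hi, hle⟩; exact ⟨_, ⟨i, by simpa using hi, rfl⟩, hle⟩
    have hJI : J ≤ I := by
      rw [hJdef, Ideal.span_le]
      rintro _ ⟨_, ⟨i, hi, rfl⟩, rfl⟩
      exact (hTa i (by simpa using hi)).2
    have hne : I ≠ J := by
      intro h
      apply hpp
      refine ⟨T, a, fun i hi => (hTa i hi).1, ?_⟩
      rw [h, hJdef, Set.image_image]
      congr 1
      exact (Set.image_congr' (fun i => X_pow_eq_monomial)).symm
    -- a monomial generator of I not in J
    have hex : ∃ g ∈ G, monomial g (1 : K) ∉ J := by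
      by_contra h
      push_neg at h
      apply hne
      refine le_antisymm ?_ hJI
      rw [hG, Ideal.span_le]
      rintro _ ⟨g, hg, rfl⟩
      exact h g hg
    obtain ⟨g₀, hg₀G, hg₀J⟩ := hex
    set deg : (Fin n →₀ ℕ) → ℕ := fun d => d.sum fun _ v => v with hdegdef
    have deg_add : ∀ d₁ d₂ : Fin n →₀ ℕ, deg (d₁ + d₂) = deg d₁ + deg d₂ := fun d₁ d₂ =>
      Finsupp.sum_add_index' (fun _ => rfl) (fun _ _ _ => rfl)
    have deg_pos : ∀ d : Fin n →₀ ℕ, d ≠ 0 → 0 < deg d := by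
      intro d hd
      obtain ⟨j, hj⟩ := Finsupp.support_nonempty_iff.2 hd
      calc 0 < d j := Nat.pos_of_ne_zero (Finsupp.mem_support_iff.1 hj)
        _ ≤ deg d := Finset.single_le_sum (fun _ _ => Nat.zero_le _) hj
    -- a degree-minimal exponent in I but outside the upper set of J
    set S : Set (Fin n →₀ ℕ) := {d | d ∈ M ∧ monomial d (1 : K) ∉ J} with hSdef
    have hSne : S.Nonempty := ⟨g₀, hGM hg₀G, hg₀J⟩
    obtain ⟨d, hdS, hdk⟩ := Nat.sInf_mem (hSne.image deg)
    have hmin : ∀ d' ∈ S, deg d ≤ deg d' := by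
      intro d' hd'
      rw [hdk]
      exact Nat.sInf_le ⟨d', hd', rfl⟩
    have hdM : d ∈ M := hdS.1
    have hdJ : monomial d (1 : K) ∉ J := hdS.2
    have hd0 : d ≠ 0 := by
      rintro rfl
      apply hproper
      rw [Ideal.eq_top_iff_one]
      simpa [hMdef] using hdM
    obtain ⟨i, hi⟩ := Finsupp.support_nonempty_iff.2 hd0
    have hdi : d i ≠ 0 := Finsupp.mem_support_iff.1 hi
    set d₁ : Fin n →₀ ℕ := Finsupp.single i (d i) with hd₁def
    set d₂ : Fin n →₀ ℕ := d.erase i with hd₂def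
    have hsplit : d₁ + d₂ = d := Finsupp.single_add_erase i d
    have hd₁0 : d₁ ≠ 0 := by simp [hd₁def, Finsupp.single_eq_zero, hdi]
    have hd₁le : d₁ ≤ d := Finsupp.single_le_iff.2 le_rfl
    have hd₂le : d₂ ≤ d := by
      intro j
      rw [hd₂def, Finsupp.erase_apply]
      split <;> simp
    have hd₂0 : d₂ ≠ 0 := by
      intro h
      have hd1 : d = d₁ := by rw [← hsplit, h, add_zero]
      have hdM' : Finsupp.single i (d i) ∈ M := by rw [← hd₁def, ← hd1]; exact hdM
      apply hdJ
      rw [hupJ]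
      have hiT : i ∈ T := by
        simp only [hTdef, Finset.mem_filter, Finset.mem_univ, true_and]
        exact ⟨d i, Nat.pos_of_ne_zero hdi, hdM'⟩
      refine ⟨i, hiT, ?_⟩
      rw [hd1, hd₁def, Finsupp.single_le_iff, Finsupp.single_eq_same]
      exact Nat.sInf_le ⟨Nat.pos_of_ne_zero hdi, hdM'⟩
    have hdeg : deg d = deg d₁ + deg d₂ := by rw [← hsplit, deg_add]
    have hd₁J : monomial d₁ (1 : K) ∉ J := fun h => hdJ (by
      rw [hupJ] at h ⊢
      obtain ⟨j, hj, hle⟩ := h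
      exact ⟨j, hj, hle.trans hd₁le⟩)
    have hd₂J : monomial d₂ (1 : K) ∉ J := fun h => hdJ (by
      rw [hupJ] at h ⊢
      obtain ⟨j, hj, hle⟩ := h
      exact ⟨j, hj, hle.trans hd₂le⟩)
    have hd₁M : d₁ ∉ M := fun h => by
      have h1 := hmin d₁ ⟨h, hd₁J⟩
      have h2 := deg_pos d₂ hd₂0
      omega
    have hd₂M : d₂ ∉ M := fun h => by
      have h1 := hmin d₂ ⟨h, hd₂J⟩
      have h2 := deg_pos d₁ hd₁0
      omega
    -- the decomposition
    refine ⟨Ideal.span ((fun e => monomial e (1 : K)) '' (G ∪ {d₁})),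
        Ideal.span ((fun e => monomial e (1 : K)) '' (G ∪ {d₂})),
        ⟨_, rfl⟩, ⟨_, rfl⟩, ?_, ?_, ?_⟩
    · refine lt_of_le_of_ne (hG ▸ Ideal.span_mono (Set.image_mono Set.subset_union_left)) ?_
      intro h
      exact hd₁M (show monomial d₁ (1 : K) ∈ I from h ▸ Ideal.subset_span
        ⟨d₁, Set.mem_union_right _ rfl, rfl⟩)
    · refine lt_of_le_of_ne (hG ▸ Ideal.span_mono (Set.image_mono Set.subset_union_left)) ?_
      intro h
      exact hd₂M (show monomial d₂ (1 : K) ∈ I from h ▸ Ideal.subset_span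
        ⟨d₂, Set.mem_union_right _ rfl, rfl⟩)
    · refine le_antisymm (le_inf
        (hG ▸ Ideal.span_mono (Set.image_mono Set.subset_union_left))
        (hG ▸ Ideal.span_mono (Set.image_mono Set.subset_union_left))) ?_
      intro p hp
      rw [Ideal.mem_inf, mem_ideal_span_monomial_image, mem_ideal_span_monomial_image] at hp
      rw [hG, mem_ideal_span_monomial_image]
      intro e he
      obtain ⟨s1, hs1, hle1⟩ := hp.1 e he
      obtain ⟨s2, hs2, hle2⟩ := hp.2 e he
      rcases hs1 with h1 | h1
      · exact ⟨s1, h1, hle1⟩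
      rcases hs2 with h2 | h2
      · exact ⟨s2, h2, hle2⟩
      rw [Set.mem_singleton_iff] at h1 h2
      subst h1; subst h2
      have hde : d ≤ e := by
        intro j
        rw [← hsplit]
        rcases eq_or_ne j i with rfl | hji
        · have : d₂ j = 0 := by simp [hd₂def]
          simpa [this] using hle1 j
        · have : d₁ j = 0 := by simp [hd₁def, Finsupp.single_apply, hji.symm]
          simpa [this] using hle2 j
      obtain ⟨g, hg, hgle⟩ := (hMmem d).1 hdM
      exact ⟨g, hg, hgle.trans hde⟩
  · rintro ⟨T, a, hapos, hI⟩ ⟨J₁, J₂, ⟨G₁, hG₁⟩, ⟨G₂, hG₂⟩, h1, h2, hEq⟩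
    have hI' : I = Ideal.span ((fun d => monomial d (1 : K)) ''
        ((fun i => Finsupp.single i (a i)) '' ↑T)) := by
      rw [hI, Set.image_image]
      congr 1
      exact Set.image_congr' (fun i => X_pow_eq_monomial)
    have pick : ∀ (J' : Ideal (MvPolynomial (Fin n) K)) (G' : Set (Fin n →₀ ℕ)),
        J' = Ideal.span ((fun d => monomial d (1 : K)) '' G') → I < J' →
        ∃ u ∈ G', monomial u (1 : K) ∉ I := by
      intro J' G' hG' hlt
      by_contra h
      push_neg at h
      exact hlt.not_ge (hG' ▸ Ideal.span_le.2 (by rintro _ ⟨u, hu, rfl⟩; exact h u hu))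
    obtain ⟨u, huG, huI⟩ := pick J₁ G₁ hG₁ h1
    obtain ⟨v, hvG, hvI⟩ := pick J₂ G₂ hG₂ h2
    have hw1 : monomial (u ⊔ v) (1 : K) ∈ J₁ := by
      rw [hG₁]; exact mono_mem_span.2 ⟨u, huG, le_sup_left⟩
    have hw2 : monomial (u ⊔ v) (1 : K) ∈ J₂ := by
      rw [hG₂]; exact mono_mem_span.2 ⟨v, hvG, le_sup_right⟩
    have hwI : monomial (u ⊔ v) (1 : K) ∈ I := by
      rw [hEq]; exact Ideal.mem_inf.2 ⟨hw1, hw2⟩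
    rw [hI', mono_mem_span] at hwI
    obtain ⟨_, ⟨i, hiT, rfl⟩, hle⟩ := hwI
    have hsup : a i ≤ u i ⊔ v i := by
      have := Finsupp.single_le_iff.1 hle
      rwa [Finsupp.sup_apply] at this
    rcases le_sup_iff.1 hsup with h | h
    · apply huI
      rw [hI', mono_mem_span]
      exact ⟨_, ⟨i, hiT, rfl⟩, Finsupp.single_le_iff.2 h⟩
    · apply hvI
      rw [hI', mono_mem_span]
      exact ⟨_, ⟨i, hiT, rfl⟩, Finsupp.single_le_iff.2 h⟩
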